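/- Let R be the right-shift operator on ℓ²(ℤ) defined by R eₙ = eₙ₊₁ on the canonical orthonormal basis. Then the unique solution f = e₀ to Rf = e₁ does not belong to the closure of the Krylov subspace K(R, e₁), since that closure equals the closed span of {e₁, e₂, e₃, ...}. -/

import Mathlib

/-- For the right shift `R` on `ℓ²(ℤ)`, the closure of the Krylov subspace `K(R, e₁)`
equals the closed span of `{e₁, e₂, …}`, and the (unique) solution `e₀` of `Rf = e₁`
does not belong to it. -/
theorem stmt1
    (R : lp (fun _ : ℤ => ℂ) 2 →L[ℂ] lp (fun _ : ℤ => ℂ) 2)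
    (hR : ∀ n : ℤ, R (lp.single 2 n 1) = lp.single 2 (n + 1) 1) :
    R (lp.single 2 (0 : ℤ) 1) = lp.single 2 (1 : ℤ) 1
    ∧ closure ((Submodule.span ℂ
          (Set.range fun k : ℕ => (R ^ k) (lp.single 2 (1 : ℤ) 1))) : Set (lp (fun _ : ℤ => ℂ) 2))
        = closure ((Submodule.span ℂ
          (Set.range fun n : ℕ => (lp.single 2 ((n : ℤ) + 1) 1 : lp (fun _ : ℤ => ℂ) 2)))
            : Set (lp (fun _ : ℤ => ℂ) 2))
    ∧ lp.single 2 (0 : ℤ) 1 ∉ closure ((Submodule.span ℂ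
          (Set.range fun k : ℕ => (R ^ k) (lp.single 2 (1 : ℤ) 1))) : Set (lp (fun _ : ℤ => ℂ) 2)) := by
  have key : ∀ k : ℕ, (R ^ k) (lp.single 2 (1 : ℤ) 1) = lp.single 2 ((k : ℤ) + 1) 1 := by
    intro k
    induction k with
    | zero => simp
    | succ n ih =>
      rw [pow_succ', ContinuousLinearMap.mul_apply, ih, hR]
      push_cast
      ring_nf
  have hrange : (Set.range fun k : ℕ => (R ^ k) (lp.single 2 (1 : ℤ) 1))
      = Set.range fun n : ℕ => (lp.single 2 ((n : ℤ) + 1) 1 : lp (fun _ : ℤ => ℂ) 2) := by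
    ext x
    simp only [Set.mem_range]
    constructor <;> rintro ⟨k, rfl⟩ <;> exact ⟨k, by rw [key k]⟩
  refine ⟨hR 0, by rw [hrange], ?_⟩
  intro hmem
  -- use continuous linear functional ⟪e₀, ·⟫
  set φ : lp (fun _ : ℤ => ℂ) 2 →L[ℂ] ℂ := innerSL ℂ (lp.single 2 (0 : ℤ) 1) with hφ
  have hker : closure ((Submodule.span ℂ
      (Set.range fun k : ℕ => (R ^ k) (lp.single 2 (1 : ℤ) 1))) : Set (lp (fun _ : ℤ => ℂ) 2))
      ⊆ (LinearMap.ker (φ : lp (fun _ : ℤ => ℂ) 2 →ₗ[ℂ] ℂ) : Set (lp (fun _ : ℤ => ℂ) 2)) := by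
    apply closure_minimal _ (ContinuousLinearMap.isClosed_ker φ)
    rw [← Submodule.coe_restrictScalars ℂ]
    intro x hx
    refine Submodule.span_induction ?_ ?_ ?_ ?_ hx
    · rintro y ⟨k, rfl⟩
      simp only [SetLike.mem_coe, LinearMap.mem_ker]
      rw [key k, hφ]
      simp only [ContinuousLinearMap.coe_coe, innerSL_apply_apply]
      rw [lp.inner_single_left]
      rw [lp.single_apply_ne]
      · simp
      · omega
    · simp only [SetLike.mem_coe, LinearMap.mem_ker, map_zero]
    · intro a b _ _ ha hb
      simp only [SetLike.mem_coe, LinearMap.mem_ker, map_add] at *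
      rw [ha, hb, add_zero]
    · intro c a _ ha
      simp only [SetLike.mem_coe, LinearMap.mem_ker, map_smul] at *
      rw [ha, smul_zero]
  have := hker hmem
  simp only [SetLike.mem_coe, LinearMap.mem_ker, hφ, ContinuousLinearMap.coe_coe, innerSL_apply_apply] at this
  rw [lp.inner_single_left, lp.single_apply_self] at this
  simp at this
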